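/- Let d ≥ 2 and k ≥ 1, and let u be a uniformly random word of length k over Σ_d = {1,…,d+1} (all (d+1)^k words equally likely). Define Y^{AN}(u) as the length of the shortest suffix of u containing every symbol of Σ_d, with Y^{AN}(u) := k if no suffix of u contains all d+1 symbols. Then Y^{AN}(u) has the same distribution as min(Y_d, k), where Y_d is the coupon-collector variable: for every j, P(Y^{AN}(u) = j) = P(min(Y_d, k) = j). -/

import Mathlib

open MeasureTheory ProbabilityTheory Finset
open scoped ENNReal

namespace CCAux

noncomputable def F (n : ℕ) : ℕ → ℕ → ℝ
  | 0, _ => 1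
  | _+1, 0 => 0
  | r+1, m+1 =>
      (((r:ℝ)+1)/(n:ℝ)) * F n r m + (1 - ((r:ℝ)+1)/(n:ℝ)) * F n (r+1) m

lemma F_zero (n m : ℕ) : F n 0 m = 1 := by cases m <;> rfl
lemma F_succ_zero (n r : ℕ) : F n (r+1) 0 = 0 := rfl
lemma F_succ_succ (n r m : ℕ) :
    F n (r+1) (m+1) =
      (((r:ℝ)+1)/(n:ℝ)) * F n r m + (1 - ((r:ℝ)+1)/(n:ℝ)) * F n (r+1) m := rfl


lemma F_nonneg (n : ℕ) : ∀ r m, r ≤ n → 0 ≤ F n r m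
  | 0, m, _ => by rw [F_zero]; norm_num
  | r+1, 0, _ => le_of_eq (F_succ_zero n r).symm
  | r+1, m+1, h => by
    rw [F_succ_succ]
    have hn : (0:ℝ) < n := by exact_mod_cast Nat.lt_of_lt_of_le (Nat.succ_pos r) h
    have h1 : (0:ℝ) ≤ ((r:ℝ)+1)/n := by positivity
    have h2 : (0:ℝ) ≤ 1 - ((r:ℝ)+1)/n := by
      have : ((r:ℝ)+1) ≤ n := by exact_mod_cast h
      have := div_le_one_of_le₀ this hn.le
      linarith
    have i1 := F_nonneg n r m (by omega)
    have i2 := F_nonneg n (r+1) m h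
    positivity

lemma F_conv (n r : ℕ) : ∀ m, F n (r+1) m =
    ∑ t ∈ Icc 1 m, ((1 - ((r:ℝ)+1)/n)^(t-1) * (((r:ℝ)+1)/n)) * F n r (m - t)
  | 0 => by simp [F_succ_zero]
  | m+1 => by
    rw [F_succ_succ, F_conv n r m]
    rw [Finset.mul_sum]
    have hre : ∀ t ∈ Icc 1 m,
        (1 - ((r:ℝ)+1)/n) * (((1 - ((r:ℝ)+1)/n)^(t-1) * (((r:ℝ)+1)/n)) * F n r (m - t))
        = ((1 - ((r:ℝ)+1)/n)^((t+1)-1) * (((r:ℝ)+1)/n)) * F n r ((m+1) - (t+1)) := by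
      intro t ht
      simp only [mem_Icc] at ht
      have h1 : t + 1 - 1 = t := rfl
      have h2 : (1 - ((r:ℝ)+1)/n)^t = (1 - ((r:ℝ)+1)/n) * (1 - ((r:ℝ)+1)/n)^(t-1) := by
        conv_lhs => rw [show t = (t-1) + 1 by omega]
        rw [pow_succ, mul_comm]
      rw [h1, h2]
      have h3 : m + 1 - (t + 1) = m - t := by omega
      rw [h3]; ring
    rw [Finset.sum_congr rfl hre]
    have hmap : ∑ t ∈ Icc 1 m, ((1 - ((r:ℝ)+1)/n)^((t+1)-1) * (((r:ℝ)+1)/n)) * F n r ((m+1) - (t+1))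
        = ∑ t ∈ Icc 2 (m+1), ((1 - ((r:ℝ)+1)/n)^(t-1) * (((r:ℝ)+1)/n)) * F n r ((m+1) - t) := by
      rw [← map_add_right_Icc 1 m 1, Finset.sum_map]
      rfl
    rw [hmap]
    have hins : Icc 1 (m+1) = insert 1 (Icc 2 (m+1)) := by
      ext t; simp [mem_Icc, mem_insert]; omega
    rw [hins, Finset.sum_insert (by simp)]
    simp

/-- Number of words of length `m` over `Fin n` covering the set `s`. -/
def Ncov (n m : ℕ) (s : Finset (Fin n)) : ℕ :=
  (Finset.univ.filter fun v : Fin m → Fin n => ∀ a ∈ s, ∃ i, v i = a).card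

lemma Ncov_card_subtype (n m : ℕ) (s : Finset (Fin n)) :
    Ncov n m s = Fintype.card {v : Fin m → Fin n // ∀ a ∈ s, ∃ i, v i = a} :=
  (Fintype.card_subtype _).symm

lemma Ncov_zero (n : ℕ) (s : Finset (Fin n)) : Ncov n 0 s = if s = ∅ then 1 else 0 := by
  classical
  split_ifs with h
  · subst h
    simp [Ncov]
  · obtain ⟨a, ha⟩ := Finset.nonempty_iff_ne_empty.2 h
    rw [Ncov, Finset.card_eq_zero]
    rw [Finset.filter_eq_empty_iff]
    intro v _ hv
    obtain ⟨i, -⟩ := hv a ha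
    exact i.elim0

lemma Ncov_succ (n m : ℕ) (s : Finset (Fin n)) :
    Ncov n (m+1) s = ∑ a : Fin n, Ncov n m (s.erase a) := by
  classical
  rw [Ncov_card_subtype]
  have key : ∀ (x : Fin n × (Fin m → Fin n)),
      (∀ b ∈ s.erase x.1, ∃ i, x.2 i = b) ↔
      (∀ a ∈ s, ∃ i, (Fin.consEquiv (fun _ => Fin n)) x i = a) := by
    rintro ⟨a, v⟩
    simp only [Fin.consEquiv_apply]
    constructor
    · intro h b hb
      by_cases hba : b = a
      · exact ⟨0, by simp [hba]⟩
      · obtain ⟨i, hi⟩ := h b (Finset.mem_erase.mpr ⟨hba, hb⟩)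
        exact ⟨i.succ, by simpa using hi⟩
    · intro h b hb
      obtain ⟨i, hi⟩ := h b (Finset.mem_erase.mp hb).2
      rcases Fin.eq_zero_or_eq_succ i with h0 | ⟨j, rfl⟩
      · subst h0
        simp only [Fin.cons_zero] at hi
        exact absurd hi.symm (Finset.mem_erase.mp hb).1
      · exact ⟨j, by simpa using hi⟩
  have e1 : {x : Fin n × (Fin m → Fin n) // ∀ b ∈ s.erase x.1, ∃ i, x.2 i = b}
      ≃ {v : Fin (m+1) → Fin n // ∀ a ∈ s, ∃ i, v i = a} :=
    Equiv.subtypeEquiv (Fin.consEquiv (fun _ => Fin n)) key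
  rw [← Fintype.card_congr e1]
  have e2 : {x : Fin n × (Fin m → Fin n) // ∀ b ∈ s.erase x.1, ∃ i, x.2 i = b}
      ≃ Σ a : Fin n, {v : Fin m → Fin n // ∀ b ∈ s.erase a, ∃ i, v i = b} :=
    Equiv.subtypeProdEquivSigmaSubtype
      (fun (a : Fin n) (v : Fin m → Fin n) => ∀ b ∈ s.erase a, ∃ i, v i = b)
  rw [Fintype.card_congr e2, Fintype.card_sigma]
  exact Finset.sum_congr rfl fun a _ => (Ncov_card_subtype n m (s.erase a)).symm

lemma Ncov_eq_F (n : ℕ) (hn : 1 ≤ n) : ∀ (m : ℕ) (s : Finset (Fin n)),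
    (Ncov n m s : ℝ) = (n:ℝ)^m * F n s.card m
  | 0, s => by
    rw [Ncov_zero]
    rcases eq_or_ne s ∅ with h | h
    · simp [h, F_zero]
    · have : s.card ≠ 0 := by simpa [Finset.card_eq_zero] using h
      obtain ⟨r, hr⟩ : ∃ r, s.card = r + 1 := ⟨s.card - 1, by omega⟩
      simp [h, hr, F_succ_zero]
  | m+1, s => by
    classical
    have hn0 : (n:ℝ) ≠ 0 := by
      have : (0:ℝ) < n := by exact_mod_cast hn
      exact this.ne'
    rw [Ncov_succ, Nat.cast_sum]
    have hcard : s.card ≤ n := le_trans (Finset.card_le_univ s) (by simp)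
    rw [← Finset.sum_add_sum_compl s]
    have h1 : ∀ a ∈ s, ((Ncov n m (s.erase a) : ℝ)) = (n:ℝ)^m * F n (s.card - 1) m := by
      intro a ha
      rw [Ncov_eq_F n hn m (s.erase a), Finset.card_erase_of_mem ha]
    have h2 : ∀ a ∈ sᶜ, ((Ncov n m (s.erase a) : ℝ)) = (n:ℝ)^m * F n s.card m := by
      intro a ha
      rw [Finset.erase_eq_of_notMem (by simpa using ha), Ncov_eq_F n hn m s]
    rw [Finset.sum_congr rfl h1, Finset.sum_congr rfl h2, Finset.sum_const, Finset.sum_const,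
      Finset.card_compl]
    simp only [nsmul_eq_mul, Fintype.card_fin]
    have hsub : ((n - s.card : ℕ) : ℝ) = (n:ℝ) - (s.card : ℝ) := by
      push_cast [Nat.cast_sub hcard]; ring
    rcases hc : s.card with _ | r
    · simp only [hc, Nat.zero_sub, F_zero, Nat.cast_zero] at hsub ⊢
      rw [hsub]
      push_cast
      ring
    · simp only [hc, Nat.add_sub_cancel, F_succ_succ] at hsub ⊢
      rw [hsub]
      push_cast
      field_simp
      ring

/-- Split a word into its prefix of length `k-j` and its suffix of length `j`. -/
def suffixEquiv (n k j : ℕ) (hj : j ≤ k) :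
    (Fin k → Fin n) ≃ (Fin (k-j) → Fin n) × (Fin j → Fin n) where
  toFun w := (fun i => w ⟨i, by omega⟩, fun t => w ⟨k - j + t, by omega⟩)
  invFun p := fun i =>
    if h : (i : ℕ) < k - j then p.1 ⟨i, h⟩ else p.2 ⟨(i : ℕ) - (k - j), by omega⟩
  left_inv w := by
    funext i
    dsimp only
    by_cases h : (i : ℕ) < k - j
    · rw [dif_pos h]
    · rw [dif_neg h]
      congr 1
      exact Fin.ext (by simp; omega)
  right_inv p := by
    obtain ⟨u, v⟩ := p
    dsimp only
    refine Prod.ext ?_ ?_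
    · funext i
      dsimp only
      rw [dif_pos (by simpa using i.2)]
    · funext t
      dsimp only
      rw [dif_neg (by simp)]
      congr 1
      exact Fin.ext (by simp)

lemma card_cov_words (n k j : ℕ) (hj : j ≤ k) :
    Nat.card {w : Fin k → Fin n // ∀ a, ∃ i : Fin k, k - j ≤ (i : ℕ) ∧ w i = a}
      = n ^ (k - j) * Ncov n j Finset.univ := by
  classical
  rw [Nat.card_eq_fintype_card]
  have key : ∀ w : Fin k → Fin n,
      (∀ a, ∃ i : Fin k, k - j ≤ (i : ℕ) ∧ w i = a) ↔
      (∀ a, ∃ t : Fin j, ((suffixEquiv n k j hj) w).2 t = a) := by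
    intro w
    constructor
    · intro h a
      obtain ⟨i, hi1, hi2⟩ := h a
      refine ⟨⟨(i : ℕ) - (k - j), by omega⟩, ?_⟩
      simp only [suffixEquiv, Equiv.coe_fn_mk]
      rw [← hi2]
      congr 1
      exact Fin.ext (by simp; omega)
    · intro h a
      obtain ⟨t, ht⟩ := h a
      exact ⟨⟨k - j + (t : ℕ), by omega⟩, by simp, ht⟩
  have e1 : {w : Fin k → Fin n // ∀ a, ∃ i : Fin k, k - j ≤ (i : ℕ) ∧ w i = a}
      ≃ {p : (Fin (k-j) → Fin n) × (Fin j → Fin n) // ∀ a, ∃ t, p.2 t = a} :=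
    Equiv.subtypeEquiv (suffixEquiv n k j hj) key
  have e2 : {p : (Fin (k-j) → Fin n) × (Fin j → Fin n) // ∀ a, ∃ t, p.2 t = a}
      ≃ (Fin (k-j) → Fin n) × {v : Fin j → Fin n // ∀ a, ∃ t, v t = a} :=
    { toFun := fun x => (x.1.1, ⟨x.1.2, x.2⟩)
      invFun := fun y => ⟨(y.1, y.2.1), y.2.2⟩
      left_inv := fun _ => rfl
      right_inv := fun _ => rfl }
  rw [Fintype.card_congr (e1.trans e2), Fintype.card_prod, Fintype.card_fun]
  congr 1
  · simp
  · rw [Ncov_card_subtype]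
    exact Fintype.card_congr (Equiv.subtypeEquivRight (fun v => by simp))

end CCAux

namespace CCAux

lemma measure_words {Ω : Type*} [MeasurableSpace Ω] (P : Measure Ω) [IsProbabilityMeasure P]
    (d k : ℕ) (W : Ω → Fin k → Fin (d+1))
    (hW : ∀ w, P {ω | W ω = w} = 1 / ((d : ℝ≥0∞)+1)^k)
    (p : (Fin k → Fin (d+1)) → Prop) [DecidablePred p] :
    P {ω | p (W ω)} = ((Finset.univ.filter p).card : ℝ≥0∞) / ((d : ℝ≥0∞)+1)^k := by
  classical
  set n1 : ℝ≥0∞ := ((d:ℝ≥0∞)+1)^k with hn1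
  have hn1top : n1 ≠ ⊤ := by
    rw [hn1]
    exact ENNReal.pow_ne_top (by simp)
  have hn10 : n1 ≠ 0 := by
    rw [hn1]
    exact pow_ne_zero _ (by simp)
  have key : ∀ S : Finset (Fin k → Fin (d+1)), P {ω | W ω ∈ S} ≤ (S.card : ℝ≥0∞) / n1 := by
    intro S
    have hset : {ω | W ω ∈ S} = ⋃ w ∈ S, {ω | W ω = w} := by ext ω; simp
    rw [hset]
    refine le_trans (measure_biUnion_finset_le S _) ?_
    rw [Finset.sum_congr rfl (fun w _ => hW w), Finset.sum_const, nsmul_eq_mul]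
    rw [one_div, div_eq_mul_inv]
  have hA : P {ω | p (W ω)} ≤ ((Finset.univ.filter p).card : ℝ≥0∞) / n1 := by
    have := key (Finset.univ.filter p)
    simpa using this
  have hB : P {ω | ¬ p (W ω)} ≤ ((Finset.univ.filter (fun w => ¬ p w)).card : ℝ≥0∞) / n1 := by
    have := key (Finset.univ.filter (fun w => ¬ p w))
    simpa using this
  have hunion : (1:ℝ≥0∞) ≤ P {ω | p (W ω)} + P {ω | ¬ p (W ω)} := by
    have huniv : (Set.univ : Set Ω) = {ω | p (W ω)} ∪ {ω | ¬ p (W ω)} := by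
      ext ω; by_cases h : p (W ω) <;> simp [h]
    calc (1:ℝ≥0∞) = P Set.univ := measure_univ.symm
    _ = P ({ω | p (W ω)} ∪ {ω | ¬ p (W ω)}) := by rw [← huniv]
    _ ≤ _ := measure_union_le _ _
  have hsum : ((Finset.univ.filter p).card : ℝ≥0∞)/n1
      + ((Finset.univ.filter (fun w => ¬ p w)).card : ℝ≥0∞)/n1 = 1 := by
    rw [ENNReal.div_add_div_same]
    have hcards : (Finset.univ.filter p).card + (Finset.univ.filter (fun w => ¬ p w)).card
        = (d+1)^k := by
      rw [Finset.card_filter_add_card_filter_not, Finset.card_univ, Fintype.card_fun]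
      simp
    have : ((Finset.univ.filter p).card : ℝ≥0∞) + ((Finset.univ.filter (fun w => ¬ p w)).card : ℝ≥0∞) = n1 := by
      rw [← Nat.cast_add, hcards, hn1]
      push_cast
      ring
    rw [this, ENNReal.div_self hn10 hn1top]
  have hctop : ((Finset.univ.filter (fun w => ¬ p w)).card : ℝ≥0∞)/n1 ≠ ⊤ :=
    ne_top_of_le_ne_top (by simp) (le_add_self.trans_eq hsum)
  refine le_antisymm hA ?_
  have hc : ((Finset.univ.filter p).card : ℝ≥0∞)/n1
      = 1 - ((Finset.univ.filter (fun w => ¬ p w)).card : ℝ≥0∞)/n1 :=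
    ENNReal.eq_sub_of_add_eq hctop hsum
  rw [hc]
  exact tsub_le_iff_right.mpr (le_trans hunion (add_le_add le_rfl hB))

end CCAux

namespace CCAux

section Geom

variable {Ω' : Type*} [MeasurableSpace Ω'] (P' : Measure Ω') [IsProbabilityMeasure P']
  (d : ℕ) (X : Fin (d + 1) → Ω' → ℕ)

lemma X_zero (hXmeas : ∀ i, Measurable (X i))
    (hXdist : ∀ (i : Fin (d + 1)) (m : ℕ), 1 ≤ m →
      P' {ω | X i ω = m} = ENNReal.ofReal
        ((1 - ((i : ℝ) + 1) / ((d : ℝ) + 1)) ^ (m - 1) * (((i : ℝ) + 1) / ((d : ℝ) + 1))))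
    (i : Fin (d + 1)) : P' {ω | X i ω = 0} = 0 := by
  set p : ℝ := ((i : ℝ) + 1) / ((d : ℝ) + 1) with hp
  have hd0 : (0:ℝ) < (d:ℝ) + 1 := by positivity
  have hp0 : 0 < p := by rw [hp]; positivity
  have hp1 : p ≤ 1 := by
    rw [hp, div_le_one hd0]
    have h := i.isLt
    have : ((i:ℕ):ℝ) + 1 ≤ (d:ℝ) + 1 := by
      have : ((i:ℕ):ℝ) ≤ (d:ℝ) := by exact_mod_cast Nat.lt_succ_iff.mp h
      linarith
    exact this
  have h1p0 : (0:ℝ) ≤ 1 - p := by linarith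
  have h1p1 : 1 - p < 1 := by linarith
  -- total mass
  have hdisj : Pairwise (Function.onFun Disjoint fun m => {ω | X i ω = m}) := by
    intro a b hab
    simp only [Function.onFun, Set.disjoint_left]
    rintro ω ha hb
    exact hab (ha.symm.trans hb)
  have hmeas : ∀ m : ℕ, MeasurableSet {ω | X i ω = m} := fun m =>
    (hXmeas i) (measurableSet_singleton m)
  have huniv : (⋃ m : ℕ, {ω | X i ω = m}) = Set.univ := by
    ext ω; simp
  have htot : ∑' m : ℕ, P' {ω | X i ω = m} = 1 := by
    rw [← measure_iUnion hdisj hmeas, huniv, measure_univ]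
  rw [tsum_eq_zero_add' ENNReal.summable] at htot
  have htail : ∑' m : ℕ, P' {ω | X i ω = m + 1} = 1 := by
    have heq : ∀ m : ℕ, P' {ω | X i ω = m + 1} = ENNReal.ofReal ((1 - p)^m * p) := by
      intro m
      rw [hXdist i (m+1) (by omega)]
      simp
      rw [hp]
    rw [tsum_congr heq]
    have hsummable : Summable (fun m : ℕ => (1 - p)^m * p) :=
      (summable_geometric_of_lt_one h1p0 h1p1).mul_right p
    rw [← ENNReal.ofReal_tsum_of_nonneg (fun m => by positivity) hsummable]
    rw [tsum_mul_right, tsum_geometric_of_lt_one h1p0 h1p1]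
    have : (1 - (1 - p))⁻¹ * p = 1 := by
      field_simp
      rw [sub_sub_cancel]; exact div_self hp0.ne'
    rw [this, ENNReal.ofReal_one]
  rw [htail] at htot
  -- htot : P' {X i = 0} + 1 = 1
  have h01 : P' {ω | X i ω = 0} + 1 = 0 + 1 := by rw [htot, zero_add]
  rw [add_comm _ (1:ℝ≥0∞), add_comm (0:ℝ≥0∞) (1:ℝ≥0∞)] at h01
  exact (ENNReal.cancel_of_ne (by simp : (1:ℝ≥0∞) ≠ ⊤)).inj.mp h01

end Geom

end CCAux

namespace CCAux

section Geom2

variable {Ω' : Type*} [MeasurableSpace Ω'] (P' : Measure Ω') [IsProbabilityMeasure P']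
  (d : ℕ) (X : Fin (d + 1) → Ω' → ℕ)

lemma sum_cdf (hXmeas : ∀ i, Measurable (X i))
    (hXdist : ∀ (i : Fin (d + 1)) (m : ℕ), 1 ≤ m →
      P' {ω | X i ω = m} = ENNReal.ofReal
        ((1 - ((i : ℝ) + 1) / ((d : ℝ) + 1)) ^ (m - 1) * (((i : ℝ) + 1) / ((d : ℝ) + 1))))
    (hXindep : iIndepFun X P') :
    ∀ r, r ≤ d + 1 → ∀ m : ℕ,
      P' {ω | (∑ i ∈ Finset.univ.filter (fun i : Fin (d+1) => (i:ℕ) < r), X i ω) ≤ m}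
        = ENNReal.ofReal (F (d+1) r m) := by
  intro r
  induction r with
  | zero =>
    intro _ m
    have h0 : (Finset.univ.filter (fun i : Fin (d+1) => (i:ℕ) < 0)) = ∅ := by
      apply Finset.filter_false_of_mem; intro i _; omega
    simp [h0, F_zero]
  | succ r ih =>
    intro hr m
    have hrd : r ≤ d + 1 := by omega
    set ir : Fin (d+1) := ⟨r, by omega⟩ with hir
    have hfilter : Finset.univ.filter (fun i : Fin (d+1) => (i:ℕ) < r+1)
        = insert ir (Finset.univ.filter (fun i : Fin (d+1) => (i:ℕ) < r)) := by
      ext i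
      simp only [Finset.mem_filter, Finset.mem_univ, true_and, Finset.mem_insert, Fin.ext_iff, hir]
      omega
    have hnot : ir ∉ Finset.univ.filter (fun i : Fin (d+1) => (i:ℕ) < r) := by
      simp [hir]
    have hS : ∀ ω, (∑ i ∈ Finset.univ.filter (fun i : Fin (d+1) => (i:ℕ) < r+1), X i ω)
        = X ir ω + ∑ i ∈ Finset.univ.filter (fun i : Fin (d+1) => (i:ℕ) < r), X i ω := by
      intro ω
      rw [hfilter, Finset.sum_insert hnot]
    have hmeasS : Measurable (fun ω =>
        ∑ i ∈ Finset.univ.filter (fun i : Fin (d+1) => (i:ℕ) < r), X i ω) :=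
      Finset.measurable_sum _ (fun i _ => hXmeas i)
    have hset : {ω | (∑ i ∈ Finset.univ.filter (fun i : Fin (d+1) => (i:ℕ) < r+1), X i ω) ≤ m}
        = ⋃ t ∈ Finset.range (m+1),
            ({ω | X ir ω = t} ∩
              {ω | (∑ i ∈ Finset.univ.filter (fun i : Fin (d+1) => (i:ℕ) < r), X i ω) ≤ m - t}) := by
      ext ω
      simp only [Set.mem_setOf_eq, Set.mem_iUnion, Set.mem_inter_iff, Finset.mem_range, hS ω]
      constructor
      · intro h
        exact ⟨X ir ω, by omega, rfl, by omega⟩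
      · rintro ⟨t, ht, h1, h2⟩
        omega
    rw [hset, measure_biUnion_finset]
    rotate_left
    · -- pairwise disjoint
      intro a _ b _ hab
      simp only [Function.onFun, Set.disjoint_left]
      rintro ω ⟨ha, -⟩ ⟨hb, -⟩
      exact hab (ha.symm.trans hb)
    · intro t _
      exact ((hXmeas ir) (measurableSet_singleton t)).inter
        (hmeasS measurableSet_Iic)
    have hind0 := (hXindep.indepFun_finsetSum_of_notMem hXmeas hnot).symm
    have hfun : (∑ j ∈ Finset.univ.filter (fun i : Fin (d+1) => (i:ℕ) < r), X j)
        = fun ω => ∑ i ∈ Finset.univ.filter (fun i : Fin (d+1) => (i:ℕ) < r), X i ω := by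
      funext ω
      simp [Finset.sum_apply]
    rw [hfun] at hind0
    have hind : IndepFun (X ir)
        (fun ω => ∑ i ∈ Finset.univ.filter (fun i : Fin (d+1) => (i:ℕ) < r), X i ω) P' := hind0
    have hterm : ∀ t, ({ω | X ir ω = t} ∩
          {ω | (∑ i ∈ Finset.univ.filter (fun i : Fin (d+1) => (i:ℕ) < r), X i ω) ≤ m - t})
        = (X ir) ⁻¹' {t} ∩
          (fun ω => ∑ i ∈ Finset.univ.filter (fun i : Fin (d+1) => (i:ℕ) < r), X i ω) ⁻¹'
            (Set.Iic (m - t)) := by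
      intro t; rfl
    have hmul : ∀ t ∈ Finset.range (m+1), P' ({ω | X ir ω = t} ∩
          {ω | (∑ i ∈ Finset.univ.filter (fun i : Fin (d+1) => (i:ℕ) < r), X i ω) ≤ m - t})
        = P' {ω | X ir ω = t}
          * P' {ω | (∑ i ∈ Finset.univ.filter (fun i : Fin (d+1) => (i:ℕ) < r), X i ω) ≤ m - t} := by
      intro t _
      rw [hterm t]
      exact hind.measure_inter_preimage_eq_mul _ _ (measurableSet_singleton t) measurableSet_Iic
    rw [Finset.sum_congr rfl hmul]
    -- split off t = 0
    have hrange : Finset.range (m+1) = insert 0 (Finset.Icc 1 m) := by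
      ext t; simp [Finset.mem_range, Finset.mem_Icc]; omega
    rw [hrange, Finset.sum_insert (by simp)]
    rw [X_zero P' d X hXmeas hXdist ir, zero_mul, zero_add]
    -- now each t in Icc 1 m
    set p : ℝ := ((r:ℝ)+1)/((d:ℝ)+1) with hp
    have hterm2 : ∀ t ∈ Finset.Icc 1 m,
        P' {ω | X ir ω = t}
          * P' {ω | (∑ i ∈ Finset.univ.filter (fun i : Fin (d+1) => (i:ℕ) < r), X i ω) ≤ m - t}
        = ENNReal.ofReal (((1 - p)^(t-1) * p) * F (d+1) r (m-t)) := by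
      intro t ht
      simp only [Finset.mem_Icc] at ht
      have hp0 : 0 ≤ p := by rw [hp]; positivity
      have hp1 : p ≤ 1 := by
        rw [hp, div_le_one (by positivity)]
        have : (r:ℝ) ≤ (d:ℝ) := by exact_mod_cast (by omega : r ≤ d)
        linarith
      have h1p : (0:ℝ) ≤ 1 - p := by linarith
      rw [hXdist ir t ht.1, ih hrd (m - t)]
      rw [← ENNReal.ofReal_mul (mul_nonneg (pow_nonneg h1p _) hp0)]
    rw [Finset.sum_congr rfl hterm2]
    rw [← ENNReal.ofReal_sum_of_nonneg]
    · congr 1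
      rw [F_conv (d+1) r m]
      apply Finset.sum_congr rfl
      intro t _
      have : ((d:ℝ)+1) = ((d+1 : ℕ) : ℝ) := by push_cast; ring
      rw [hp, this]
    · intro t ht
      simp only [Finset.mem_Icc] at ht
      have hp0 : 0 ≤ p := by rw [hp]; positivity
      have hp1 : p ≤ 1 := by
        rw [hp, div_le_one (by positivity)]
        have : (r:ℝ) ≤ (d:ℝ) := by exact_mod_cast (by omega : r ≤ d)
        linarith
      have hF := F_nonneg (d+1) r (m-t) (by omega)
      have h1p : (0:ℝ) ≤ 1 - p := by linarith
      positivity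

end Geom2

end CCAux

/-- `YAN d k w` is the length of the shortest suffix of the word `w : Fin k → Fin (d+1)`
(the suffix of length `j` consisting of the positions `i` with `k − j ≤ i`) that contains
every symbol of `Σ_d = {1,…,d+1}`; it equals `k` if no suffix contains all `d+1` symbols. -/
noncomputable def YAN (d k : ℕ) (w : Fin k → Fin (d + 1)) : ℕ :=
  letI := Classical.dec
  if h : ∃ j : ℕ, ∀ a : Fin (d + 1), ∃ i : Fin k, k - j ≤ (i : ℕ) ∧ w i = a
  then Nat.find h else k

namespace CCAux

/-- `Cov w j` : the suffix of length `j` of `w` contains every symbol. -/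
def Cov (d k : ℕ) (w : Fin k → Fin (d + 1)) (j : ℕ) : Prop :=
  ∀ a : Fin (d + 1), ∃ i : Fin k, k - j ≤ (i : ℕ) ∧ w i = a

lemma cov_mono {d k : ℕ} {w : Fin k → Fin (d + 1)} {j j' : ℕ} (h : j ≤ j') (hc : Cov d k w j) :
    Cov d k w j' := by
  intro a
  obtain ⟨i, hi1, hi2⟩ := hc a
  exact ⟨i, by omega, hi2⟩

lemma YAN_le_k (d k : ℕ) (w : Fin k → Fin (d + 1)) : YAN d k w ≤ k := by
  letI : DecidablePred (fun j : ℕ => ∀ a : Fin (d + 1), ∃ i : Fin k, k - j ≤ (i : ℕ) ∧ w i = a) :=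
    fun _ => Classical.dec _
  unfold YAN
  split_ifs with h
  · have hcovk : ∀ a : Fin (d + 1), ∃ i : Fin k, k - k ≤ (i : ℕ) ∧ w i = a := by
      intro a
      obtain ⟨j0, hj0⟩ := h
      obtain ⟨i, _, hi⟩ := hj0 a
      exact ⟨i, by omega, hi⟩
    exact Nat.find_le hcovk
  · exact le_rfl

lemma YAN_le_iff {d k : ℕ} (w : Fin k → Fin (d + 1)) {j : ℕ} (hjk : j < k) :
    YAN d k w ≤ j ↔ Cov d k w j := by
  letI : DecidablePred (fun j : ℕ => ∀ a : Fin (d + 1), ∃ i : Fin k, k - j ≤ (i : ℕ) ∧ w i = a) :=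
    fun _ => Classical.dec _
  unfold YAN
  split_ifs with h
  · constructor
    · intro hle
      exact cov_mono hle (show Cov d k w _ from Nat.find_spec h)
    · intro hc
      exact Nat.find_le hc
  · constructor
    · intro hle; omega
    · intro hc
      exact absurd ⟨j, hc⟩ h
 
lemma YAN_ne_zero {d k : ℕ} (hk : 1 ≤ k) (w : Fin k → Fin (d + 1)) : YAN d k w ≠ 0 := by
  intro h0
  have hc : Cov d k w 0 := (YAN_le_iff w (by omega)).mp (le_of_eq h0)
  obtain ⟨i, hi, -⟩ := hc ⟨0, by omega⟩
  have := i.isLt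
  omega

end CCAux

/-- Let `d ≥ 2`, `k ≥ 1`, and let `W` be a uniformly random word of length `k`
over `Σ_d = {1,…,d+1}`.  Then `Y^{AN}(W)` has the same distribution as `min (Y_d, k)`, where
`Y_d = X_1 + ⋯ + X_{d+1}` is a sum of independent geometric random variables,
`X_i` having success probability `i/(d+1)`. -/
theorem YAN_distribution_eq_truncated_couponCollector
    (d k : ℕ) (hd : 2 ≤ d) (hk : 1 ≤ k)
    {Ω : Type*} [MeasurableSpace Ω] (P : Measure Ω) [IsProbabilityMeasure P]
    (W : Ω → Fin k → Fin (d + 1))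
    (hW : ∀ w : Fin k → Fin (d + 1), P {ω | W ω = w} = 1 / ((d : ℝ≥0∞) + 1) ^ k)
    {Ω' : Type*} [MeasurableSpace Ω'] (P' : Measure Ω') [IsProbabilityMeasure P']
    (X : Fin (d + 1) → Ω' → ℕ) (hXmeas : ∀ i, Measurable (X i))
    (hXdist : ∀ (i : Fin (d + 1)) (m : ℕ), 1 ≤ m →
      P' {ω | X i ω = m} = ENNReal.ofReal
        ((1 - ((i : ℝ) + 1) / ((d : ℝ) + 1)) ^ (m - 1) * (((i : ℝ) + 1) / ((d : ℝ) + 1))))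
    (hXindep : iIndepFun X P') :
    ∀ j : ℕ, P {ω | YAN d k (W ω) = j} = P' {ω | min (∑ i, X i ω) k = j} := by
  classical
  intro j
  set n1 : ℝ≥0∞ := ((d : ℝ≥0∞) + 1) ^ k with hn1
  have hn1top : n1 ≠ ⊤ := by rw [hn1]; exact ENNReal.pow_ne_top (by simp)
  have hn10 : n1 ≠ 0 := by rw [hn1]; exact pow_ne_zero _ (by simp)
  have hfilall : Finset.univ.filter (fun i : Fin (d+1) => (i:ℕ) < d+1) = Finset.univ := by
    apply Finset.filter_true_of_mem; intro i _; exact i.isLt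
  have hcdf : ∀ m : ℕ, P' {ω | (∑ i, X i ω) ≤ m} = ENNReal.ofReal (CCAux.F (d+1) (d+1) m) := by
    intro m
    have h := CCAux.sum_cdf P' d X hXmeas hXdist hXindep (d+1) le_rfl m
    rw [hfilall] at h
    exact h
  have hTmeas : Measurable (fun ω => ∑ i, X i ω) := Finset.measurable_sum _ fun i _ => hXmeas i
  have hword : ∀ (p : (Fin k → Fin (d+1)) → Prop) (_ : DecidablePred p),
      P {ω | p (W ω)} = ((Finset.univ.filter p).card : ℝ≥0∞) / n1 := by
    intro p hp
    exact CCAux.measure_words P d k W hW p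
  have hAcast : ∀ m : ℕ, m ≤ k →
      ((Finset.univ.filter (fun w : Fin k → Fin (d+1) => CCAux.Cov d k w m)).card : ℝ≥0∞) / n1
        = ENNReal.ofReal (CCAux.F (d+1) (d+1) m) := by
    intro m hm
    have hcard : (Finset.univ.filter (fun w : Fin k → Fin (d+1) => CCAux.Cov d k w m)).card
        = (d+1)^(k-m) * CCAux.Ncov (d+1) m Finset.univ := by
      rw [← Fintype.card_subtype, ← Nat.card_eq_fintype_card]
      exact CCAux.card_cov_words (d+1) k m hm
    rw [hcard]
    have hNr : (CCAux.Ncov (d+1) m Finset.univ : ℝ) = ((d:ℝ)+1)^m * CCAux.F (d+1) (d+1) m := by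
      have h := CCAux.Ncov_eq_F (d+1) (by omega) m Finset.univ
      rw [Finset.card_univ, Fintype.card_fin] at h
      rw [h]; push_cast; ring
    have hFnn : 0 ≤ CCAux.F (d+1) (d+1) m := CCAux.F_nonneg (d+1) (d+1) m le_rfl
    have hN1 : ((CCAux.Ncov (d+1) m Finset.univ : ℕ) : ℝ≥0∞)
        = ((d:ℝ≥0∞)+1)^m * ENNReal.ofReal (CCAux.F (d+1) (d+1) m) := by
      rw [← ENNReal.ofReal_natCast, hNr, ENNReal.ofReal_mul (by positivity)]
      congr 1
      rw [show (((d:ℝ)+1))^m = (((((d:ℕ)+1)^m : ℕ)):ℝ) by push_cast; ring]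
      rw [ENNReal.ofReal_natCast]
      push_cast; ring
    rw [Nat.cast_mul, hN1]
    rw [show (((d+1)^(k-m) : ℕ) : ℝ≥0∞) = ((d:ℝ≥0∞)+1)^(k-m) by push_cast; ring]
    rw [← mul_assoc, ← pow_add]
    rw [show k - m + m = k from by omega, ← hn1]
    rw [mul_comm n1 _, mul_div_assoc, ENNReal.div_self hn10 hn1top, mul_one]
  rcases Nat.lt_trichotomy j k with hjk | hjk | hjk
  · -- j < k
    rcases Nat.eq_zero_or_pos j with rfl | hj1
    · have hL : P {ω | YAN d k (W ω) = 0} = 0 := by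
        rw [hword (fun w => YAN d k w = 0) (by infer_instance)]
        have hempty : (Finset.univ.filter (fun w : Fin k → Fin (d+1) => YAN d k w = 0)) = ∅ := by
          apply Finset.filter_false_of_mem
          intro w _
          exact CCAux.YAN_ne_zero hk w
        rw [hempty]
        simp
      have hR : P' {ω | min (∑ i, X i ω) k = 0} = 0 := by
        have hsub : {ω | min (∑ i, X i ω) k = 0} ⊆ {ω | X ⟨0, by omega⟩ ω = 0} := by
          intro ω hω
          simp only [Set.mem_setOf_eq] at hω ⊢
          have hT : (∑ i, X i ω) = 0 := by omega
          exact Finset.sum_eq_zero_iff.mp hT ⟨0, by omega⟩ (Finset.mem_univ _)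
        exact le_antisymm (le_trans (measure_mono hsub)
          (le_of_eq (CCAux.X_zero P' d X hXmeas hXdist _))) zero_le
      rw [hL, hR]
    · have hfe : (Finset.univ.filter (fun w : Fin k → Fin (d+1) => YAN d k w = j))
          = (Finset.univ.filter (fun w => CCAux.Cov d k w j))
            \ (Finset.univ.filter (fun w => CCAux.Cov d k w (j-1))) := by
        ext w
        simp only [Finset.mem_filter, Finset.mem_sdiff, Finset.mem_univ, true_and]
        rw [← CCAux.YAN_le_iff w hjk, ← CCAux.YAN_le_iff w (by omega : j - 1 < k)]
        omega
      have hsubset : (Finset.univ.filter (fun w : Fin k → Fin (d+1) => CCAux.Cov d k w (j-1)))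
          ⊆ (Finset.univ.filter (fun w => CCAux.Cov d k w j)) := by
        intro w hw
        simp only [Finset.mem_filter, Finset.mem_univ, true_and] at hw ⊢
        exact CCAux.cov_mono (by omega) hw
      rw [hword (fun w => YAN d k w = j) (by infer_instance), hfe, Finset.card_sdiff_of_subset hsubset]
      rw [ENNReal.natCast_sub]
      rw [ENNReal.sub_div (by intro _ _; exact hn10)]
      rw [hAcast j (by omega), hAcast (j-1) (by omega)]
      have hsetR : {ω | min (∑ i, X i ω) k = j}
          = {ω | (∑ i, X i ω) ≤ j} \ {ω | (∑ i, X i ω) ≤ j - 1} := by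
        ext ω
        simp only [Set.mem_setOf_eq, Set.mem_diff]
        omega
      rw [hsetR, measure_diff (fun ω => by simp only [Set.mem_setOf_eq]; omega)
        ((show MeasurableSet {ω | (∑ i, X i ω) ≤ j - 1} from
          hTmeas measurableSet_Iic).nullMeasurableSet) (measure_ne_top _ _)]
      rw [hcdf j, hcdf (j-1)]
  · -- j = k
    subst hjk
    have hfe : (Finset.univ.filter (fun w : Fin j → Fin (d+1) => YAN d j w = j))
        = Finset.univ \ (Finset.univ.filter (fun w => CCAux.Cov d j w (j-1))) := by
      ext w
      simp only [Finset.mem_filter, Finset.mem_sdiff, Finset.mem_univ, true_and]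
      rw [← CCAux.YAN_le_iff w (by omega : j - 1 < j)]
      have := CCAux.YAN_le_k d j w
      omega
    rw [hword (fun w => YAN d j w = j) (by infer_instance), hfe,
      Finset.card_sdiff_of_subset (Finset.filter_subset _ _)]
    have hcu : (Finset.univ : Finset (Fin j → Fin (d+1))).card = (d+1)^j := by
      rw [Finset.card_univ, Fintype.card_fun]
      simp
    rw [hcu, ENNReal.natCast_sub]
    rw [ENNReal.sub_div (by intro _ _; exact hn10)]
    rw [hAcast (j-1) (by omega)]
    have h1 : (((d+1)^j : ℕ) : ℝ≥0∞) / n1 = 1 := by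
      rw [show (((d+1)^j : ℕ) : ℝ≥0∞) = n1 by rw [hn1]; push_cast; ring]
      exact ENNReal.div_self hn10 hn1top
    rw [h1]
    have hsetR : {ω | min (∑ i, X i ω) j = j} = {ω | (∑ i, X i ω) ≤ j - 1}ᶜ := by
      ext ω
      simp only [Set.mem_setOf_eq, Set.mem_compl_iff]
      omega
    rw [hsetR, measure_compl (show MeasurableSet {ω | (∑ i, X i ω) ≤ j - 1} from
      hTmeas measurableSet_Iic) (measure_ne_top _ _), measure_univ, hcdf (j-1)]
  · -- j > k
    have hL : P {ω | YAN d k (W ω) = j} = 0 := by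
      rw [hword (fun w => YAN d k w = j) (by infer_instance)]
      have hempty : (Finset.univ.filter (fun w : Fin k → Fin (d+1) => YAN d k w = j)) = ∅ := by
        apply Finset.filter_false_of_mem
        intro w _
        have := CCAux.YAN_le_k d k w
        omega
      rw [hempty]
      simp
    have hR : {ω | min (∑ i, X i ω) k = j} = ∅ := by
      ext ω
      simp only [Set.mem_setOf_eq, Set.mem_empty_iff_false, iff_false]
      have := min_le_right (∑ i, X i ω) k
      omega
    rw [hL, hR, measure_empty]
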